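/- For any tree T with n ≥ 5 pendent vertices, Π_2(T) = Π_{v∈V(T)} d_T(v)^{d_T(v)} ≥ exp((5 ln 5 / 3)·(n-2)), with equality at any tree whose internal vertices all have degree 5 (which exists when (n-2)/3 is an integer). -/

import Mathlib

open scoped Classical

/-! ### Arithmetic key lemmas -/

lemma natkey : ∀ d : ℕ, 2 ≤ d → 5 ^ (5 * (d - 2)) ≤ d ^ (3 * d) := by
  intro d hd
  rcases le_or_gt d 14 with h | h
  · interval_cases d <;> norm_num
  · calc 5 ^ (5 * (d - 2)) ≤ 5 ^ (5 * d) := Nat.pow_le_pow_right (by norm_num) (by omega)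
      _ = (5 ^ 5) ^ d := by rw [← pow_mul]
      _ ≤ (15 ^ 3) ^ d := Nat.pow_le_pow_left (by norm_num) d
      _ = 15 ^ (3 * d) := by rw [← pow_mul]
      _ ≤ d ^ (3 * d) := Nat.pow_le_pow_left (by omega) _

lemma keyineq (d : ℕ) (hd : d ≠ 1) :
    5 * Real.log 5 / 3 * ((d : ℝ) - 2) ≤ (d : ℝ) * Real.log d := by
  rcases Nat.eq_zero_or_pos d with rfl | hpos
  · have h5 : (0:ℝ) ≤ Real.log 5 := Real.log_nonneg (by norm_num)
    simp only [Nat.cast_zero, Real.log_zero, mul_zero]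
    nlinarith
  · have hd2 : 2 ≤ d := by omega
    have h := natkey d hd2
    have hc : ((5:ℝ)) ^ (5 * (d - 2)) ≤ (d : ℝ) ^ (3 * d) := by
      exact_mod_cast Nat.cast_le.mpr h
    have hlog := Real.log_le_log (by positivity) hc
    rw [Real.log_pow, Real.log_pow] at hlog
    have hcast : ((5 * (d - 2) : ℕ) : ℝ) = 5 * ((d:ℝ) - 2) := by
      push_cast [Nat.cast_sub hd2]; ring
    rw [hcast] at hlog
    push_cast at hlog ⊢
    nlinarith [hlog]

/-! ### Part 1: the inequality for arbitrary trees -/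

lemma part1 (n : ℕ) (V : Type) [Fintype V] (G : SimpleGraph V)
    [DecidableRel G.Adj] (hT : G.IsTree)
    (hleaf : (Finset.univ.filter fun v => G.degree v = 1).card = n) :
      (Real.exp ((5 * Real.log 5 / 3) * ((n : ℝ) - 2)) ≤
        ∏ v : V, (G.degree v : ℝ) ^ (G.degree v)) ∧
      ((∀ v : V, G.degree v ≠ 1 → G.degree v = 5) →
        ∏ v : V, (G.degree v : ℝ) ^ (G.degree v) =
          Real.exp ((5 * Real.log 5 / 3) * ((n : ℝ) - 2))) := by
  classical
  set d : V → ℕ := fun v => G.degree v with hd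
  -- product as exponential
  have key1 : ∀ v : V, ((d v : ℝ)) ^ (d v) = Real.exp ((d v : ℝ) * Real.log (d v)) := by
    intro v
    rcases Nat.eq_zero_or_pos (d v) with h0 | hpos
    · rw [h0]; simp
    · rw [Real.exp_nat_mul, Real.exp_log (by exact_mod_cast hpos)]
  have hprod : (∏ v : V, (d v : ℝ) ^ (d v)) =
      Real.exp (∑ v : V, (d v : ℝ) * Real.log (d v)) := by
    rw [Real.exp_sum]
    exact Finset.prod_congr rfl fun v _ => key1 v
  -- sum of degrees
  have hE : G.edgeFinset.card + 1 = Fintype.card V := hT.card_edgeFinset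
  have hsumdeg : ∑ v : V, d v = 2 * G.edgeFinset.card :=
    G.sum_degrees_eq_twice_card_edges
  have hsumR : ∑ v : V, ((d v : ℝ) - 2) = -2 := by
    have h1 : ∑ v : V, (d v : ℝ) = 2 * (G.edgeFinset.card : ℝ) := by
      exact_mod_cast congrArg (Nat.cast : ℕ → ℝ) hsumdeg
    have h2 : (G.edgeFinset.card : ℝ) + 1 = (Fintype.card V : ℝ) := by
      exact_mod_cast congrArg (Nat.cast : ℕ → ℝ) hE
    rw [Finset.sum_sub_distrib, h1, Finset.sum_const, Finset.card_univ, nsmul_eq_mul]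
    linarith
  set S : Finset V := Finset.univ.filter fun v => d v = 1 with hS
  set T : Finset V := Finset.univ.filter fun v => ¬ d v = 1 with hT'
  have hsplit : ∀ f : V → ℝ, ∑ v : V, f v = ∑ v ∈ S, f v + ∑ v ∈ T, f v := by
    intro f
    rw [hS, hT']
    exact (Finset.sum_filter_add_sum_filter_not Finset.univ _ f).symm
  have hScard : S.card = n := hleaf
  have hTsum : ∑ v ∈ T, ((d v : ℝ) - 2) = (n : ℝ) - 2 := by
    have hSsum : ∑ v ∈ S, ((d v : ℝ) - 2) = -(n : ℝ) := by
      have : ∑ v ∈ S, ((d v : ℝ) - 2) = ∑ _v ∈ S, (-1 : ℝ) := by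
        refine Finset.sum_congr rfl fun v hv => ?_
        rw [hS] at hv
        rw [(Finset.mem_filter.mp hv).2]
        norm_num
      rw [this, Finset.sum_const, hScard, nsmul_eq_mul]
      ring
    have := hsplit (fun v => (d v : ℝ) - 2)
    rw [hsumR, hSsum] at this
    linarith
  have hSlog : ∑ v ∈ S, (d v : ℝ) * Real.log (d v) = 0 := by
    apply Finset.sum_eq_zero
    intro v hv
    rw [hS] at hv
    rw [(Finset.mem_filter.mp hv).2]
    simp
  have hsumlog : ∑ v : V, (d v : ℝ) * Real.log (d v) =
      ∑ v ∈ T, (d v : ℝ) * Real.log (d v) := by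
    rw [hsplit, hSlog, zero_add]
  constructor
  · rw [hprod]
    apply Real.exp_le_exp.mpr
    rw [hsumlog]
    calc 5 * Real.log 5 / 3 * ((n : ℝ) - 2)
        = ∑ v ∈ T, 5 * Real.log 5 / 3 * ((d v : ℝ) - 2) := by
          rw [← Finset.mul_sum, hTsum]
      _ ≤ ∑ v ∈ T, (d v : ℝ) * Real.log (d v) := by
          apply Finset.sum_le_sum
          intro v hv
          rw [hT'] at hv
          exact keyineq (d v) (Finset.mem_filter.mp hv).2
  · intro hint
    rw [hprod, hsumlog]
    congr 1
    have hTd : ∀ v ∈ T, d v = 5 := by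
      intro v hv
      rw [hT'] at hv
      exact hint v (Finset.mem_filter.mp hv).2
    have h5 : ∑ v ∈ T, (d v : ℝ) * Real.log (d v) = T.card * (5 * Real.log 5) := by
      have : ∑ v ∈ T, (d v : ℝ) * Real.log (d v) = ∑ _v ∈ T, (5 * Real.log 5) := by
        refine Finset.sum_congr rfl fun v hv => ?_
        rw [hTd v hv]; norm_num
      rw [this, Finset.sum_const, nsmul_eq_mul]
    have h3 : ∑ v ∈ T, ((d v : ℝ) - 2) = T.card * 3 := by
      have : ∑ v ∈ T, ((d v : ℝ) - 2) = ∑ _v ∈ T, (3 : ℝ) := by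
        refine Finset.sum_congr rfl fun v hv => ?_
        rw [hTd v hv]; norm_num
      rw [this, Finset.sum_const, nsmul_eq_mul]
    rw [h5]
    rw [h3] at hTsum
    rw [← hTsum]
    ring

/-! ### Part 2: construction of the extremal tree -/

def pfun (k : ℕ) (v : ℕ) : ℕ := if v < k then v - 1 else min ((v - k - 1) / 3) (k - 1)

lemma pfun_le (k v : ℕ) : pfun k v ≤ v := by
  unfold pfun; split_ifs <;> omega

lemma pfun_lt (k v : ℕ) (hv : 0 < v) : pfun k v < v := by
  unfold pfun; split_ifs <;> omega

def pg (k : ℕ) : SimpleGraph (Fin (4 * k + 2)) where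
  Adj i j := (pfun k i = (j : ℕ) ∧ (j : ℕ) < (i : ℕ)) ∨
             (pfun k j = (i : ℕ) ∧ (i : ℕ) < (j : ℕ))
  symm := ⟨by intro i j h; tauto⟩
  loopless := ⟨by intro i h; rcases h with ⟨_, h⟩ | ⟨_, h⟩ <;> exact absurd h (lt_irrefl _)⟩

instance pgDec (k : ℕ) : DecidableRel (pg k).Adj := fun i j =>
  inferInstanceAs (Decidable (_ ∨ _))

lemma pg_adj (k : ℕ) (i j : Fin (4 * k + 2)) :
    (pg k).Adj i j ↔ (pfun k i = (j : ℕ) ∧ (j : ℕ) < (i : ℕ)) ∨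
             (pfun k j = (i : ℕ) ∧ (i : ℕ) < (j : ℕ)) := Iff.rfl

lemma pg_connected (k : ℕ) : (pg k).Connected := by
  have hz : (0 : ℕ) < 4 * k + 2 := by omega
  rw [SimpleGraph.connected_iff]
  refine ⟨?_, ⟨⟨0, hz⟩⟩⟩
  have key : ∀ N (v : Fin (4 * k + 2)), (v : ℕ) ≤ N → (pg k).Reachable v ⟨0, hz⟩ := by
    intro N
    induction N with
    | zero =>
      intro v hv
      have : v = ⟨0, hz⟩ := by ext; simpa using hv
      rw [this]
    | succ N ih =>
      intro v hv
      rcases Nat.eq_zero_or_pos (v : ℕ) with h0 | hpos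
      · have : v = ⟨0, hz⟩ := by ext; simpa using h0
        rw [this]
      · have hplt : pfun k (v : ℕ) < (v : ℕ) := pfun_lt k _ hpos
        set w : Fin (4 * k + 2) := ⟨pfun k (v : ℕ), by omega⟩ with hw
        have hadj : (pg k).Adj v w := by
          rw [pg_adj]
          left
          exact ⟨rfl, hplt⟩
        exact hadj.reachable.trans (ih w (by simp [hw]; omega))
  intro u v
  exact (key _ u le_rfl).trans (key _ v le_rfl).symm

lemma pg_acyclic (k : ℕ) : (pg k).IsAcyclic := by
  rw [SimpleGraph.isAcyclic_iff_forall_adj_isBridge]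
  have main : ∀ v w : Fin (4 * k + 2), pfun k (v : ℕ) = (w : ℕ) → (w : ℕ) < (v : ℕ) →
      (pg k).IsBridge s(v, w) := by
    intro v w hpw hwv
    rw [SimpleGraph.isBridge_iff]
    rintro ⟨q⟩
    set G' := pg k \ SimpleGraph.fromEdgeSet {s(v, w)} with hG'
    set below : Fin (4 * k + 2) → Prop :=
      fun x => ∃ j : ℕ, (pfun k)^[j] (x : ℕ) = (v : ℕ) with hbelow
    have step : ∀ a b : Fin (4 * k + 2), G'.Walk a b → below a → below b := by
      intro a b walk
      induction walk with
      | nil => exact id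
      | @cons a c b h q ih =>
        intro ha
        apply ih
        have hGadj : (pg k).Adj a c := h.1
        have hne : s(a, c) ≠ s(v, w) := by
          intro hcontra
          apply h.2
          rw [SimpleGraph.fromEdgeSet_adj]
          exact ⟨by simp [hcontra], hGadj.ne⟩
        rcases (pg_adj k a c).mp hGadj with ⟨hp, hlt⟩ | ⟨hp, hlt⟩
        · by_cases hav : a = v
          · exfalso
            apply hne
            have : (c : ℕ) = (w : ℕ) := by rw [← hp, hav, hpw]
            have hc : c = w := Fin.ext this
            rw [hav, hc]
          · obtain ⟨j, hj⟩ := ha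
            have hj0 : j ≠ 0 := by
              intro h0
              rw [h0] at hj
              simp at hj
              exact hav (Fin.ext hj)
            obtain ⟨j', rfl⟩ := Nat.exists_eq_succ_of_ne_zero hj0
            refine ⟨j', ?_⟩
            rw [Function.iterate_succ_apply] at hj
            rw [← hp]
            exact hj
        · obtain ⟨j, hj⟩ := ha
          refine ⟨j + 1, ?_⟩
          rw [Function.iterate_succ_apply, hp]
          exact hj
    have hbv : below v := ⟨0, rfl⟩
    have hbw : below w := step v w q hbv
    obtain ⟨j, hj⟩ := hbw
    have hle : ∀ j : ℕ, (pfun k)^[j] (w : ℕ) ≤ (w : ℕ) := by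
      intro j
      induction j with
      | zero => simp
      | succ j ih =>
        rw [Function.iterate_succ_apply']
        exact le_trans (pfun_le k _) ih
    have := hle j
    omega
  intro v w hadj
  rcases (pg_adj k v w).mp hadj with ⟨hp, hlt⟩ | ⟨hp, hlt⟩
  · exact main v w hp hlt
  · rw [Sym2.eq_swap]
    exact main w v hp hlt

lemma card_filter_fin (m : ℕ) (Q : ℕ → Prop) [DecidablePred Q] :
    (Finset.univ.filter (fun j : Fin m => Q (j : ℕ))).card
      = ((Finset.range m).filter Q).card := by
  apply Finset.card_bij (fun (a : Fin m) _ => (a : ℕ))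
  · intro a ha
    simp only [Finset.mem_filter, Finset.mem_range, Finset.mem_univ, true_and] at ha ⊢
    exact ⟨a.isLt, ha⟩
  · intro a _ b _ h
    exact Fin.val_injective h
  · intro b hb
    simp only [Finset.mem_filter, Finset.mem_range] at hb
    exact ⟨⟨b, hb.1⟩, by simp [hb.2], rfl⟩

lemma card5 {a b c d e : ℕ} (h1 : a < b) (h2 : b < c) (h3 : c < d) (h4 : d < e) :
    ({a, b, c, d, e} : Finset ℕ).card = 5 := by
  rw [Finset.card_insert_of_notMem (by simp only [Finset.mem_insert, Finset.mem_singleton]; omega),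
      Finset.card_insert_of_notMem (by simp only [Finset.mem_insert, Finset.mem_singleton]; omega),
      Finset.card_insert_of_notMem (by simp only [Finset.mem_insert, Finset.mem_singleton]; omega),
      Finset.card_insert_of_notMem (by simp only [Finset.mem_singleton]; omega),
      Finset.card_singleton]

lemma pg_degree (k : ℕ) (hk : 1 ≤ k) (v : Fin (4 * k + 2)) :
    (pg k).degree v = if (v : ℕ) < k then 5 else 1 := by
  set a : ℕ := (v : ℕ) with ha
  have hav : a < 4 * k + 2 := v.isLt
  rw [← SimpleGraph.card_neighborFinset_eq_degree]
  have hnb : (pg k).neighborFinset v =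
      Finset.univ.filter (fun j : Fin (4 * k + 2) =>
        (pfun k a = (j : ℕ) ∧ (j : ℕ) < a) ∨ (pfun k (j : ℕ) = a ∧ a < (j : ℕ))) := by
    ext j
    simp only [SimpleGraph.mem_neighborFinset, Finset.mem_filter, Finset.mem_univ, true_and]
    rfl
  rw [hnb, card_filter_fin (4 * k + 2)
    (fun j => (pfun k a = j ∧ j < a) ∨ (pfun k j = a ∧ a < j))]
  by_cases hik : a < k
  · rw [if_pos hik]
    rcases Nat.eq_zero_or_pos a with ha0 | hapos
    · rcases eq_or_lt_of_le hk with hk1 | hk2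
      · have hset : ((Finset.range (4 * k + 2)).filter
            (fun j => (pfun k a = j ∧ j < a) ∨ (pfun k j = a ∧ a < j)))
            = ({1, 2, 3, 4, 5} : Finset ℕ) := by
          ext j
          rw [Finset.mem_filter]; simp only [Finset.mem_filter, Finset.mem_range, Finset.mem_insert,
            Finset.mem_singleton, pfun]
          split_ifs <;> omega
        rw [hset, card5 (by omega) (by omega) (by omega) (by omega)]
      · have hset : ((Finset.range (4 * k + 2)).filter
            (fun j => (pfun k a = j ∧ j < a) ∨ (pfun k j = a ∧ a < j)))
            = ({1, k, k + 1, k + 2, k + 3} : Finset ℕ) := by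
          ext j
          rw [Finset.mem_filter]; simp only [Finset.mem_filter, Finset.mem_range, Finset.mem_insert,
            Finset.mem_singleton, pfun]
          split_ifs <;> omega
        rw [hset, card5 (by omega) (by omega) (by omega) (by omega)]
    · rcases lt_or_ge a (k - 1) with hmid | hlast
      · have hset : ((Finset.range (4 * k + 2)).filter
            (fun j => (pfun k a = j ∧ j < a) ∨ (pfun k j = a ∧ a < j)))
            = ({a - 1, a + 1, k + 3 * a + 1, k + 3 * a + 2, k + 3 * a + 3} : Finset ℕ) := by
          ext j
          rw [Finset.mem_filter]; simp only [Finset.mem_filter, Finset.mem_range, Finset.mem_insert,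
            Finset.mem_singleton, pfun]
          split_ifs <;> omega
        rw [hset, card5 (by omega) (by omega) (by omega) (by omega)]
      · have hset : ((Finset.range (4 * k + 2)).filter
            (fun j => (pfun k a = j ∧ j < a) ∨ (pfun k j = a ∧ a < j)))
            = ({k - 2, 4 * k - 2, 4 * k - 1, 4 * k, 4 * k + 1} : Finset ℕ) := by
          ext j
          rw [Finset.mem_filter]; simp only [Finset.mem_filter, Finset.mem_range, Finset.mem_insert,
            Finset.mem_singleton, pfun]
          split_ifs <;> omega
        rw [hset, card5 (by omega) (by omega) (by omega) (by omega)]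
  · rw [if_neg hik]
    have hset : ((Finset.range (4 * k + 2)).filter
        (fun j => (pfun k a = j ∧ j < a) ∨ (pfun k j = a ∧ a < j)))
        = ({pfun k a} : Finset ℕ) := by
      ext j
      rw [Finset.mem_filter]; simp only [Finset.mem_filter, Finset.mem_range, Finset.mem_singleton, pfun]
      split_ifs <;> omega
    rw [hset, Finset.card_singleton]

lemma pg_leaves (k : ℕ) (hk : 1 ≤ k) :
    (Finset.univ.filter fun v : Fin (4 * k + 2) => (pg k).degree v = 1).card = 3 * k + 2 := by
  have hcong : (Finset.univ.filter fun v : Fin (4 * k + 2) => (pg k).degree v = 1)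
      = Finset.univ.filter (fun v : Fin (4 * k + 2) => ¬ ((v : ℕ) < k)) := by
    apply Finset.filter_congr
    intro v _
    rw [pg_degree k hk v]
    split_ifs with h <;> simp [h]
  rw [hcong, card_filter_fin (4 * k + 2) (fun j => ¬ (j < k))]
  have : ((Finset.range (4 * k + 2)).filter (fun j => ¬ (j < k))) = Finset.Ico k (4 * k + 2) := by
    ext j
    simp only [Finset.mem_filter, Finset.mem_range, Finset.mem_Ico]
    omega
  rw [this, Nat.card_Ico]
  omega

lemma pg_internal (k : ℕ) (hk : 1 ≤ k) (v : Fin (4 * k + 2)) :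
    (pg k).degree v ≠ 1 → (pg k).degree v = 5 := by
  rw [pg_degree k hk v]
  split_ifs <;> simp

set_option maxHeartbeats 800000 in
/-- For any tree `T` with `n ≥ 5` pendent vertices,
`Π₂(T) = Π_v d(v)^{d(v)} ≥ exp((5 ln 5 / 3)·(n-2))`, with equality at any tree whose
internal vertices all have degree 5; such a tree exists when `(n-2)/3` is an integer. -/
theorem stmt_12 (n : ℕ) (hn : 5 ≤ n) :
    (∀ (V : Type) [Fintype V] (G : SimpleGraph V) [DecidableRel G.Adj],
      G.IsTree → (Finset.univ.filter fun v => G.degree v = 1).card = n →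
      (Real.exp ((5 * Real.log 5 / 3) * ((n : ℝ) - 2)) ≤
        ∏ v : V, (G.degree v : ℝ) ^ (G.degree v)) ∧
      ((∀ v : V, G.degree v ≠ 1 → G.degree v = 5) →
        ∏ v : V, (G.degree v : ℝ) ^ (G.degree v) =
          Real.exp ((5 * Real.log 5 / 3) * ((n : ℝ) - 2)))) ∧
    (3 ∣ (n - 2) →
      ∃ (m : ℕ) (G : SimpleGraph (Fin m)),
        G.IsTree ∧ (Finset.univ.filter fun v => G.degree v = 1).card = n ∧
        (∀ v, G.degree v ≠ 1 → G.degree v = 5)) := by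
  constructor
  · intro V _ G _ hT hleaf
    exact part1 n V G hT hleaf
  · intro hdvd
    obtain ⟨k, hk3⟩ := hdvd
    have hk : 1 ≤ k := by omega
    have hnk : n = 3 * k + 2 := by omega
    have hdeg : ∀ (I : DecidableRel (pg k).Adj) (v : Fin (4 * k + 2)),
        @SimpleGraph.degree _ (pg k) v (@SimpleGraph.neighborSetFintype _ (pg k) _ I v)
          = @SimpleGraph.degree _ (pg k) v
              (@SimpleGraph.neighborSetFintype _ (pg k) _ (pgDec k) v) := fun I v => by congr!
    refine ⟨4 * k + 2, pg k, ⟨pg_connected k, pg_acyclic k⟩, ?_, ?_⟩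
    · rw [hnk]
      have := pg_leaves k hk
      convert this using 2
      congr!
    · intro v h
      have e := hdeg (fun a b => Classical.propDecidable ((pg k).Adj a b)) v
      rw [e] at h ⊢
      exact pg_internal k hk v h
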